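/- Let λ = (λ₁,λ₂,λ₃) ∈ ℂ³ with λ₁+λ₂+λ₃ = 0 and λᵢ−λⱼ ∉ 2ℤ for all i ≠ j. Then the six functions (y₁,y₂) ↦ M°_{wλ}(y₁,y₂) on (0,∞)², as w ranges over the six permutations of the coordinates (λ₁,λ₂,λ₃), are linearly independent over ℂ. -/

import Mathlib

set_option maxHeartbeats 1000000

open scoped Real

noncomputable section

/-- The modified Bessel function of the first kind (summand is 0 at poles of Γ). -/
def Ibessel (ν : ℂ) (x : ℝ) : ℂ :=
  ∑' n : ℕ, Complex.exp ((ν + 2 * (n : ℂ)) * (Real.log (x / 2) : ℂ)) /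
    ((n.factorial : ℂ) * Complex.Gamma ((n : ℂ) + ν + 1))

/-- `M°_λ(y₁,y₂)`, the entire series of products of `I`-Bessel functions. -/
def Mcirc (l₁ l₂ l₃ : ℂ) (y₁ y₂ : ℝ) : ℂ :=
  ∑' m : ℕ,
    ((π * y₁ : ℝ) : ℂ) ^ ((m : ℂ) - l₃ / 2) * ((π * y₂ : ℝ) : ℂ) ^ ((m : ℂ) + l₁ / 2) /
      ((m.factorial : ℂ) * Complex.Gamma ((m : ℂ) + (l₁ - l₃) / 2 + 1)) *
      Ibessel ((m : ℂ) + (l₁ - l₂) / 2) (2 * π * y₁) *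
      Ibessel ((m : ℂ) + (l₂ - l₃) / 2) (2 * π * y₂)

open Complex

/-- The power-series part of the Bessel function. -/
def Pfun (σ : ℂ) (m : ℕ) (z : ℂ) : ℂ :=
  ∑' n : ℕ, z ^ n / ((n.factorial : ℂ) * Complex.Gamma (σ + 1 + ((m + n : ℕ) : ℂ)))

/-- The function `Φ` (in logarithmic variables). -/
def Phi (l₁ l₂ l₃ : ℂ) (u v : ℂ) : ℂ :=
  ∑' m : ℕ, Complex.exp ((2 * m + l₁) * u + (2 * m - l₃) * v) /
      ((m.factorial : ℂ) * Complex.Gamma ((l₁ - l₃) / 2 + 1 + (m : ℂ))) *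
      Pfun ((l₁ - l₂) / 2) m (Complex.exp (2 * u)) *
      Pfun ((l₂ - l₃) / 2) m (Complex.exp (2 * v))

/-- Diagonal restriction of `Φ`, as a power series in `x`. -/
def gfun (l₁ l₂ l₃ : ℂ) (x : ℂ) : ℂ :=
  ∑' m : ℕ, x ^ (2 * m) / ((m.factorial : ℂ) * Complex.Gamma ((l₁ - l₃) / 2 + 1 + (m : ℂ))) *
    Pfun ((l₁ - l₂) / 2) m x * Pfun ((l₂ - l₃) / 2) m x



/-- Inverse Gamma bound along a shifted integer lattice. -/
lemma gammaInv_bound (σ : ℂ) (hσ : ∀ k : ℕ, σ + 1 + (k : ℂ) ≠ 0) :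
    ∃ C K : ℝ, 1 ≤ C ∧ 1 ≤ K ∧ ∀ k : ℕ,
      ‖(Complex.Gamma (σ + 1 + (k : ℂ)))⁻¹‖ ≤ C * K ^ k / k.factorial := by
  set τ : ℂ := σ + 1 with hτ
  obtain ⟨N, hN⟩ : ∃ N : ℕ, 2 * ‖τ‖ + 2 ≤ N := exists_nat_ge (2 * ‖τ‖ + 2)
  set B : ℕ → ℝ := fun k => ‖(Complex.Gamma (τ + (k : ℂ)))⁻¹‖ with hB
  set C : ℝ := 1 + ∑ k ∈ Finset.range (N + 1), B k * k.factorial / 4 ^ k with hC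
  have hBnn : ∀ k, 0 ≤ B k := fun k => norm_nonneg _
  have hterm_nn : ∀ k, 0 ≤ B k * k.factorial / 4 ^ k := by
    intro k; positivity
  have hC1 : 1 ≤ C := by
    have : 0 ≤ ∑ k ∈ Finset.range (N + 1), B k * k.factorial / 4 ^ k :=
      Finset.sum_nonneg fun k _ => hterm_nn k
    simp only [hC]; linarith
  have hCnn : 0 ≤ C := le_trans zero_le_one hC1
  have hCbase : ∀ k ≤ N, B k ≤ C * 4 ^ k / k.factorial := by
    intro k hk
    have hmem : k ∈ Finset.range (N + 1) := Finset.mem_range.2 (by omega)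
    have h1 : B k * k.factorial / 4 ^ k ≤ C := by
      have := Finset.single_le_sum (f := fun k => B k * k.factorial / 4 ^ k)
        (fun i _ => hterm_nn i) hmem
      simp only [hC]; linarith
    have h4 : (0:ℝ) < 4 ^ k := by positivity
    have hf : (0:ℝ) < (k.factorial : ℝ) := by positivity
    rw [le_div_iff₀ hf]
    have h2 : B k * (k.factorial : ℝ) ≤ C * 4 ^ k := (div_le_iff₀ h4).1 h1
    linarith
  refine ⟨C, 4, hC1, by norm_num, ?_⟩
  intro k
  induction k with
  | zero => exact hCbase 0 (Nat.zero_le _)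
  | succ k ih =>
    by_cases hk : k + 1 ≤ N
    · exact hCbase (k + 1) hk
    · have hkN : N ≤ k := by omega
      have hz : τ + (k : ℂ) ≠ 0 := hσ k
      have hnorm : B (k + 1) = B k * ‖τ + (k : ℂ)‖⁻¹ := by
        simp only [hB]
        rw [show τ + ((k + 1 : ℕ) : ℂ) = (τ + k) + 1 from by push_cast; ring,
          Complex.Gamma_add_one _ hz, mul_inv, norm_mul, norm_inv, mul_comm]
      have hklarge : 2 * ‖τ‖ + 2 ≤ (k : ℝ) := le_trans hN (by exact_mod_cast Nat.cast_le.2 hkN)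
      have hlow : ((k : ℝ) + 1) / 2 ≤ ‖τ + (k : ℂ)‖ := by
        have h1 : ‖(k : ℂ)‖ ≤ ‖τ + (k : ℂ)‖ + ‖τ‖ := by
          simpa using norm_sub_le (τ + (k : ℂ)) τ
        have h2 : ‖(k : ℂ)‖ = (k : ℝ) := by simp
        rw [h2] at h1; linarith
      have hpos : (0:ℝ) < ((k:ℝ) + 1) / 2 := by positivity
      have hinv : ‖τ + (k : ℂ)‖⁻¹ ≤ 2 / ((k : ℝ) + 1) := by
        have hnz : (0:ℝ) < ‖τ + (k : ℂ)‖ := lt_of_lt_of_le hpos hlow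
        rw [inv_le_comm₀ hnz (by positivity), inv_div]
        exact hlow
      calc B (k+1) = B k * ‖τ + (k : ℂ)‖⁻¹ := hnorm
        _ ≤ (C * 4 ^ k / k.factorial) * (2 / ((k:ℝ) + 1)) := by
            apply mul_le_mul ih hinv (by positivity)
            exact div_nonneg (mul_nonneg hCnn (by positivity)) (by positivity)
        _ ≤ C * 4 ^ (k+1) / (k+1).factorial := by
            rw [Nat.factorial_succ]
            push_cast
            rw [div_mul_div_comm, mul_comm ((k:ℝ)+1) (k.factorial:ℝ)]
            have hnum : C * 4 ^ k * 2 ≤ C * 4 ^ (k+1) := by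
              rw [pow_succ]
              nlinarith [pow_pos (show (0:ℝ) < 4 by norm_num) k, hCnn]
            exact (div_le_div_iff_of_pos_right (by positivity)).mpr hnum



/-- The power-series part of the Bessel function. -/
lemma Pfun_term_bound {σ : ℂ} {C K : ℝ} (hC : 1 ≤ C) (hK : 1 ≤ K)
    (hG : ∀ k : ℕ, ‖(Complex.Gamma (σ + 1 + (k : ℂ)))⁻¹‖ ≤ C * K ^ k / k.factorial)
    (m n : ℕ) (z : ℂ) :
    ‖z ^ n / ((n.factorial : ℂ) * Complex.Gamma (σ + 1 + ((m + n : ℕ) : ℂ)))‖ ≤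
      C * K ^ m / m.factorial * ((K * ‖z‖) ^ n / n.factorial) := by
  have hC0 : (0:ℝ) ≤ C := le_trans zero_le_one hC
  have hK0 : (0:ℝ) ≤ K := le_trans zero_le_one hK
  have hfact : ((m.factorial * n.factorial : ℕ) : ℝ) ≤ ((m + n).factorial : ℝ) := by
    exact_mod_cast Nat.le_of_dvd (Nat.factorial_pos _)
      (Nat.factorial_mul_factorial_dvd_factorial_add m n)
  have h1 : ‖z ^ n / ((n.factorial : ℂ) * Complex.Gamma (σ + 1 + ((m + n : ℕ) : ℂ)))‖
      = ‖z‖ ^ n / (n.factorial : ℝ) * ‖(Complex.Gamma (σ + 1 + ((m + n : ℕ) : ℂ)))⁻¹‖ := by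
    rw [div_eq_mul_inv, mul_inv, norm_mul, norm_mul, norm_pow, norm_inv, Complex.norm_natCast]
    ring
  rw [h1]
  calc ‖z‖ ^ n / (n.factorial : ℝ) * ‖(Complex.Gamma (σ + 1 + ((m + n : ℕ) : ℂ)))⁻¹‖
      ≤ ‖z‖ ^ n / (n.factorial : ℝ) * (C * K ^ (m + n) / (m + n).factorial) := by
        apply mul_le_mul_of_nonneg_left (hG (m + n)) (by positivity)
    _ = ‖z‖ ^ n * (C * K ^ (m + n)) / ((n.factorial : ℝ) * ((m + n).factorial : ℝ)) := by
        rw [div_mul_div_comm]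
    _ ≤ C * K ^ m * ((K * ‖z‖) ^ n) / ((m.factorial : ℝ) * (n.factorial : ℝ)) := by
        apply div_le_div₀ (by positivity) (le_of_eq (by rw [pow_add, mul_pow]; ring))
          (by positivity)
        · have h2 : ((m.factorial : ℝ) * n.factorial) ≤ ((m + n).factorial : ℝ) := by
            exact_mod_cast hfact
          have h3 : (1:ℝ) ≤ (n.factorial : ℝ) := by exact_mod_cast Nat.one_le_iff_ne_zero.2 (Nat.factorial_ne_zero n)
          nlinarith [(Nat.cast_pos (α := ℝ)).2 (Nat.factorial_pos (m+n))]
    _ = C * K ^ m / m.factorial * ((K * ‖z‖) ^ n / n.factorial) := by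
        rw [div_mul_div_comm]
  
lemma Pfun_summable {σ : ℂ} {C K : ℝ} (hC : 1 ≤ C) (hK : 1 ≤ K)
    (hG : ∀ k : ℕ, ‖(Complex.Gamma (σ + 1 + (k : ℂ)))⁻¹‖ ≤ C * K ^ k / k.factorial)
    (m : ℕ) (z : ℂ) :
    Summable (fun n : ℕ => z ^ n / ((n.factorial : ℂ) * Complex.Gamma (σ + 1 + ((m + n : ℕ) : ℂ)))) := by
  apply Summable.of_norm_bounded
    (((Real.summable_pow_div_factorial (K * ‖z‖)).mul_left (C * K ^ m / m.factorial)))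
  exact fun n => Pfun_term_bound hC hK hG m n z

lemma Pfun_norm_le {σ : ℂ} {C K : ℝ} (hC : 1 ≤ C) (hK : 1 ≤ K)
    (hG : ∀ k : ℕ, ‖(Complex.Gamma (σ + 1 + (k : ℂ)))⁻¹‖ ≤ C * K ^ k / k.factorial)
    (m : ℕ) (z : ℂ) :
    ‖Pfun σ m z‖ ≤ C * K ^ m / m.factorial * Real.exp (K * ‖z‖) := by
  have hC0 : (0:ℝ) ≤ C := le_trans zero_le_one hC
  have hK0 : (0:ℝ) ≤ K := le_trans zero_le_one hK
  have hg : Summable (fun n : ℕ => C * K ^ m / m.factorial * ((K * ‖z‖) ^ n / n.factorial)) :=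
    (Real.summable_pow_div_factorial (K * ‖z‖)).mul_left _
  have h1 : ‖Pfun σ m z‖ ≤ ∑' n : ℕ, C * K ^ m / m.factorial * ((K * ‖z‖) ^ n / n.factorial) :=
    tsum_of_norm_bounded hg.hasSum (fun n => Pfun_term_bound hC hK hG m n z)
  have h2 : ∑' n : ℕ, C * K ^ m / m.factorial * ((K * ‖z‖) ^ n / n.factorial)
      = C * K ^ m / m.factorial * ∑' n : ℕ, ((K * ‖z‖) ^ n / n.factorial) := tsum_mul_left
  have h3 : ∑' n : ℕ, ((K * ‖z‖) ^ n / n.factorial) ≤ Real.exp (K * ‖z‖) :=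
    Summable.tsum_le_of_sum_range_le (Real.summable_pow_div_factorial _)
      (fun n => Real.sum_le_exp_of_nonneg (by positivity) n)
  calc ‖Pfun σ m z‖ ≤ _ := h1
    _ = _ := h2
    _ ≤ C * K ^ m / m.factorial * Real.exp (K * ‖z‖) :=
        mul_le_mul_of_nonneg_left h3 (by positivity)

lemma Pfun_differentiable {σ : ℂ} {C K : ℝ} (hC : 1 ≤ C) (hK : 1 ≤ K)
    (hG : ∀ k : ℕ, ‖(Complex.Gamma (σ + 1 + (k : ℂ)))⁻¹‖ ≤ C * K ^ k / k.factorial)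
    (m : ℕ) : Differentiable ℂ (Pfun σ m) := by
  have hK0 : (0:ℝ) ≤ K := le_trans zero_le_one hK
  intro z₀
  set R : ℝ := ‖z₀‖ + 1 with hR
  have hdiff : DifferentiableOn ℂ (fun z : ℂ => ∑' n : ℕ,
      z ^ n / ((n.factorial : ℂ) * Complex.Gamma (σ + 1 + ((m + n : ℕ) : ℂ)))) (Metric.ball 0 R) := by
    apply differentiableOn_tsum_of_summable_norm
      (u := fun n : ℕ => C * K ^ m / m.factorial * ((K * R) ^ n / n.factorial))
      ((Real.summable_pow_div_factorial (K * R)).mul_left _)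
      (fun n => (Differentiable.differentiableOn (by fun_prop)))
      Metric.isOpen_ball
    intro n w hw
    have hwR : ‖w‖ ≤ R := le_of_lt (mem_ball_zero_iff.1 hw)
    calc ‖w ^ n / ((n.factorial : ℂ) * Complex.Gamma (σ + 1 + ((m + n : ℕ) : ℂ)))‖
        ≤ C * K ^ m / m.factorial * ((K * ‖w‖) ^ n / n.factorial) := Pfun_term_bound hC hK hG m n w
      _ ≤ C * K ^ m / m.factorial * ((K * R) ^ n / n.factorial) := by
          have hC0 : (0:ℝ) ≤ C := le_trans zero_le_one hC
          apply mul_le_mul_of_nonneg_left ?_ (by positivity)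
          apply div_le_div_of_nonneg_right ?_ (by positivity)
          exact pow_le_pow_left₀ (by positivity) (mul_le_mul_of_nonneg_left hwR hK0) n
  have : DifferentiableAt ℂ (Pfun σ m) z₀ := by
    have hz₀ : z₀ ∈ Metric.ball (0:ℂ) R := by
      rw [mem_ball_zero_iff, hR]; linarith
    exact (hdiff z₀ hz₀).differentiableAt (Metric.isOpen_ball.mem_nhds hz₀)
  exact this

lemma Pfun_zero (σ : ℂ) (m : ℕ) : Pfun σ m 0 = (Complex.Gamma (σ + 1 + (m : ℂ)))⁻¹ := by
  rw [Pfun, tsum_eq_single 0]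
  · simp
  · intro n hn
    rw [zero_pow hn, zero_div]



lemma norm_cexp_le (z : ℂ) : ‖Complex.exp z‖ ≤ Real.exp ‖z‖ := by
  rw [Complex.norm_exp]
  exact Real.exp_le_exp.2 (Complex.re_le_norm z)

lemma norm_cexp_le_of_le {z : ℂ} {r : ℝ} (h : ‖z‖ ≤ r) : ‖Complex.exp z‖ ≤ Real.exp r :=
  le_trans (norm_cexp_le z) (Real.exp_le_exp.2 h)

/-- Uniform bound for the summands of `Φ`. -/
lemma Phi_term_bound (l₁ l₂ l₃ : ℂ)
    (h₁ : ∀ k : ℕ, (l₁ - l₃) / 2 + 1 + (k : ℂ) ≠ 0)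
    (h₂ : ∀ k : ℕ, (l₁ - l₂) / 2 + 1 + (k : ℂ) ≠ 0)
    (h₃ : ∀ k : ℕ, (l₂ - l₃) / 2 + 1 + (k : ℂ) ≠ 0) :
    ∃ C K : ℝ, 1 ≤ C ∧ 1 ≤ K ∧ ∀ (R S : ℝ), 0 ≤ R → 0 ≤ S →
      ∀ (m : ℕ) (u v : ℂ), ‖u‖ ≤ R → ‖v‖ ≤ S →
      ‖Complex.exp ((2 * m + l₁) * u + (2 * m - l₃) * v) /
        ((m.factorial : ℂ) * Complex.Gamma ((l₁ - l₃) / 2 + 1 + (m : ℂ))) *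
        Pfun ((l₁ - l₂) / 2) m (Complex.exp (2 * u)) *
        Pfun ((l₂ - l₃) / 2) m (Complex.exp (2 * v))‖ ≤
      (C * Real.exp (K * (R + S)) * Real.exp (K * Real.exp (2 * R)) *
        Real.exp (K * Real.exp (2 * S))) *
        ((K * Real.exp (2 * R + 2 * S)) ^ m / m.factorial) := by
  obtain ⟨C₁, K₁, hC₁, hK₁, hG₁⟩ := gammaInv_bound _ h₁
  obtain ⟨C₂, K₂, hC₂, hK₂, hG₂⟩ := gammaInv_bound _ h₂
  obtain ⟨C₃, K₃, hC₃, hK₃, hG₃⟩ := gammaInv_bound _ h₃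
  have hC₁0 : (0:ℝ) < C₁ := lt_of_lt_of_le one_pos hC₁
  have hC₂0 : (0:ℝ) < C₂ := lt_of_lt_of_le one_pos hC₂
  have hC₃0 : (0:ℝ) < C₃ := lt_of_lt_of_le one_pos hC₃
  have hK₁0 : (0:ℝ) < K₁ := lt_of_lt_of_le one_pos hK₁
  have hK₂0 : (0:ℝ) < K₂ := lt_of_lt_of_le one_pos hK₂
  have hK₃0 : (0:ℝ) < K₃ := lt_of_lt_of_le one_pos hK₃
  have h12 : (1:ℝ) ≤ K₁ * K₂ := by nlinarith
  have h123 : (1:ℝ) ≤ K₁ * K₂ * K₃ := by nlinarith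
  have h13 : (1:ℝ) ≤ K₁ * K₃ := by nlinarith
  have hl₁ := norm_nonneg l₁
  have hl₃ := norm_nonneg l₃
  have hc12 : (1:ℝ) ≤ C₁ * C₂ := by nlinarith
  have hc123 : (1:ℝ) ≤ C₁ * C₂ * C₃ := by nlinarith
  refine ⟨C₁ * C₂ * C₃, ‖l₁‖ + ‖l₃‖ + K₁ * K₂ * K₃, hc123, by linarith, ?_⟩
  set K : ℝ := ‖l₁‖ + ‖l₃‖ + K₁ * K₂ * K₃ with hKdef
  have hK1 : (1:ℝ) ≤ K := by simp only [hKdef]; linarith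
  have hK0 : (0:ℝ) ≤ K := by linarith
  have hKl₁ : ‖l₁‖ ≤ K := by simp only [hKdef]; nlinarith
  have hKl₃ : ‖l₃‖ ≤ K := by simp only [hKdef]; nlinarith
  have hKK₂ : K₂ ≤ K := by simp only [hKdef]; nlinarith
  have hKK₃ : K₃ ≤ K := by simp only [hKdef]; nlinarith
  have hK123 : K₁ * K₂ * K₃ ≤ K := by simp only [hKdef]; nlinarith
  intro R S hR hS m u v hu hv
  have hfac₁ : (1:ℝ) ≤ (m.factorial : ℝ) := by
    exact_mod_cast Nat.one_le_iff_ne_zero.2 (Nat.factorial_ne_zero m)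
  have hfacpos : (0:ℝ) < (m.factorial : ℝ) := by positivity
  set E0 : ℝ := Real.exp (K * (R + S)) with hE0
  set E1 : ℝ := Real.exp (K * Real.exp (2 * R)) with hE1
  set E2 : ℝ := Real.exp (K * Real.exp (2 * S)) with hE2
  set X : ℝ := Real.exp (2 * R + 2 * S) with hX
  have hE0p : (0:ℝ) < E0 := Real.exp_pos _
  have hE1p : (0:ℝ) < E1 := Real.exp_pos _
  have hE2p : (0:ℝ) < E2 := Real.exp_pos _
  have hXp : (0:ℝ) < X := Real.exp_pos _
  -- bound on the exponential factor
  have e1 : ‖Complex.exp ((2 * m + l₁) * u + (2 * m - l₃) * v)‖ ≤ E0 * X ^ m := by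
    have harg : ‖(2 * (m:ℂ) + l₁) * u + (2 * (m:ℂ) - l₃) * v‖ ≤
        K * (R + S) + m * (2 * R + 2 * S) := by
      have t1 : ‖(2 * (m:ℂ) + l₁) * u‖ ≤ (2 * m + ‖l₁‖) * R := by
        rw [norm_mul]
        apply mul_le_mul ?_ hu (norm_nonneg _) (by positivity)
        calc ‖2 * (m:ℂ) + l₁‖ ≤ ‖(2 * (m:ℂ) : ℂ)‖ + ‖l₁‖ := norm_add_le _ _
          _ = 2 * m + ‖l₁‖ := by norm_num
      have t2 : ‖(2 * (m:ℂ) - l₃) * v‖ ≤ (2 * m + ‖l₃‖) * S := by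
        rw [norm_mul]
        apply mul_le_mul ?_ hv (norm_nonneg _) (by positivity)
        calc ‖2 * (m:ℂ) - l₃‖ ≤ ‖(2 * (m:ℂ) : ℂ)‖ + ‖l₃‖ := norm_sub_le _ _
          _ = 2 * m + ‖l₃‖ := by norm_num
      calc ‖(2 * (m:ℂ) + l₁) * u + (2 * (m:ℂ) - l₃) * v‖
          ≤ ‖(2 * (m:ℂ) + l₁) * u‖ + ‖(2 * (m:ℂ) - l₃) * v‖ := norm_add_le _ _
        _ ≤ (2 * m + ‖l₁‖) * R + (2 * m + ‖l₃‖) * S := add_le_add t1 t2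
        _ ≤ K * (R + S) + m * (2 * R + 2 * S) := by
            have q1 : ‖l₁‖ * R ≤ K * R := mul_le_mul_of_nonneg_right hKl₁ hR
            have q2 : ‖l₃‖ * S ≤ K * S := mul_le_mul_of_nonneg_right hKl₃ hS
            nlinarith [q1, q2]
    calc ‖Complex.exp ((2 * m + l₁) * u + (2 * m - l₃) * v)‖
        ≤ Real.exp (K * (R + S) + m * (2 * R + 2 * S)) := norm_cexp_le_of_le harg
      _ = E0 * X ^ m := by
          rw [Real.exp_add, hE0, hX, ← Real.exp_nat_mul]
  have e2 : ‖((m.factorial : ℂ) * Complex.Gamma ((l₁ - l₃) / 2 + 1 + (m : ℂ)))⁻¹‖ ≤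
      (m.factorial : ℝ)⁻¹ * (C₁ * K₁ ^ m / m.factorial) := by
    rw [mul_inv, norm_mul, norm_inv, Complex.norm_natCast]
    apply mul_le_mul_of_nonneg_left ?_ (by positivity)
    exact_mod_cast hG₁ m
  have h2u : ‖(2:ℂ) * u‖ = 2 * ‖u‖ := by rw [norm_mul]; norm_num
  have h2v : ‖(2:ℂ) * v‖ = 2 * ‖v‖ := by rw [norm_mul]; norm_num
  have e4 : ‖Pfun ((l₁ - l₂) / 2) m (Complex.exp (2 * u))‖ ≤ C₂ * K₂ ^ m * E1 := by
    have hz : ‖Complex.exp (2 * u)‖ ≤ Real.exp (2 * R) :=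
      norm_cexp_le_of_le (by rw [h2u]; linarith)
    have hmono : Real.exp (K₂ * ‖Complex.exp (2 * u)‖) ≤ E1 := by
      rw [hE1]; apply Real.exp_le_exp.2
      exact mul_le_mul hKK₂ hz (norm_nonneg _) hK0
    have hfacle : C₂ * K₂ ^ m / m.factorial ≤ C₂ * K₂ ^ m :=
      div_le_self (mul_pos hC₂0 (pow_pos hK₂0 m)).le hfac₁
    exact le_trans (Pfun_norm_le hC₂ hK₂ hG₂ m _)
      (mul_le_mul hfacle hmono (Real.exp_pos _).le (mul_pos hC₂0 (pow_pos hK₂0 m)).le)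
  have e5 : ‖Pfun ((l₂ - l₃) / 2) m (Complex.exp (2 * v))‖ ≤ C₃ * K₃ ^ m * E2 := by
    have hz : ‖Complex.exp (2 * v)‖ ≤ Real.exp (2 * S) :=
      norm_cexp_le_of_le (by rw [h2v]; linarith)
    have hmono : Real.exp (K₃ * ‖Complex.exp (2 * v)‖) ≤ E2 := by
      rw [hE2]; apply Real.exp_le_exp.2
      exact mul_le_mul hKK₃ hz (norm_nonneg _) hK0
    have hfacle : C₃ * K₃ ^ m / m.factorial ≤ C₃ * K₃ ^ m :=
      div_le_self (mul_pos hC₃0 (pow_pos hK₃0 m)).le hfac₁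
    exact le_trans (Pfun_norm_le hC₃ hK₃ hG₃ m _)
      (mul_le_mul hfacle hmono (Real.exp_pos _).le (mul_pos hC₃0 (pow_pos hK₃0 m)).le)
  have hsplit : ‖Complex.exp ((2 * m + l₁) * u + (2 * m - l₃) * v) /
        ((m.factorial : ℂ) * Complex.Gamma ((l₁ - l₃) / 2 + 1 + (m : ℂ))) *
        Pfun ((l₁ - l₂) / 2) m (Complex.exp (2 * u)) *
        Pfun ((l₂ - l₃) / 2) m (Complex.exp (2 * v))‖
      = ‖Complex.exp ((2 * m + l₁) * u + (2 * m - l₃) * v)‖ *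
        ‖((m.factorial : ℂ) * Complex.Gamma ((l₁ - l₃) / 2 + 1 + (m : ℂ)))⁻¹‖ *
        ‖Pfun ((l₁ - l₂) / 2) m (Complex.exp (2 * u))‖ *
        ‖Pfun ((l₂ - l₃) / 2) m (Complex.exp (2 * v))‖ := by
    rw [div_eq_mul_inv, norm_mul, norm_mul, norm_mul]
  rw [hsplit]
  have n2 : (0:ℝ) ≤ (m.factorial : ℝ)⁻¹ * (C₁ * K₁ ^ m / m.factorial) := by
    apply mul_nonneg (by positivity)
    exact div_nonneg (mul_nonneg hC₁0.le (pow_pos hK₁0 m).le) hfacpos.le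
  have n12 : (0:ℝ) ≤ (E0 * X ^ m) * ((m.factorial : ℝ)⁻¹ * (C₁ * K₁ ^ m / m.factorial)) :=
    mul_nonneg (mul_nonneg hE0p.le (pow_pos hXp m).le) n2
  have n4 : (0:ℝ) ≤ C₂ * K₂ ^ m * E1 := (mul_pos (mul_pos hC₂0 (pow_pos hK₂0 m)) hE1p).le
  have step1 : ‖Complex.exp ((2 * m + l₁) * u + (2 * m - l₃) * v)‖ *
        ‖((m.factorial : ℂ) * Complex.Gamma ((l₁ - l₃) / 2 + 1 + (m : ℂ)))⁻¹‖ *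
        ‖Pfun ((l₁ - l₂) / 2) m (Complex.exp (2 * u))‖ *
        ‖Pfun ((l₂ - l₃) / 2) m (Complex.exp (2 * v))‖
      ≤ (E0 * X ^ m) * ((m.factorial : ℝ)⁻¹ * (C₁ * K₁ ^ m / m.factorial)) *
        (C₂ * K₂ ^ m * E1) * (C₃ * K₃ ^ m * E2) := by
    apply mul_le_mul ?_ e5 (norm_nonneg _) (mul_nonneg n12 n4)
    apply mul_le_mul ?_ e4 (norm_nonneg _) n12
    exact mul_le_mul e1 e2 (norm_nonneg _) (mul_nonneg hE0p.le (pow_pos hXp m).le)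
  refine step1.trans ?_
  have hA : K₁ ^ m * K₂ ^ m * K₃ ^ m ≤ K ^ m := by
    rw [← mul_pow, ← mul_pow]
    exact pow_le_pow_left₀ (by positivity) hK123 m
  have hi : ((m.factorial : ℝ))⁻¹ ≤ 1 := by
    rw [inv_le_one_iff₀]; right; exact hfac₁
  have hP : (0:ℝ) < E0 * E1 * E2 * (C₁ * C₂ * C₃) * X ^ m / m.factorial := by
    apply div_pos ?_ hfacpos
    exact mul_pos (mul_pos (mul_pos (mul_pos hE0p hE1p) hE2p)
      (mul_pos (mul_pos hC₁0 hC₂0) hC₃0)) (pow_pos hXp m)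
  calc (E0 * X ^ m) * ((m.factorial : ℝ)⁻¹ * (C₁ * K₁ ^ m / m.factorial)) *
        (C₂ * K₂ ^ m * E1) * (C₃ * K₃ ^ m * E2)
      = (E0 * E1 * E2 * (C₁ * C₂ * C₃) * X ^ m / m.factorial) *
        ((K₁ ^ m * K₂ ^ m * K₃ ^ m) * (m.factorial : ℝ)⁻¹) := by ring
    _ ≤ (E0 * E1 * E2 * (C₁ * C₂ * C₃) * X ^ m / m.factorial) * (K ^ m * 1) := by
        apply mul_le_mul_of_nonneg_left ?_ hP.le
        exact mul_le_mul hA hi (by positivity) (pow_nonneg hK0 m)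
    _ = (C₁ * C₂ * C₃ * E0 * E1 * E2) * ((K * X) ^ m / m.factorial) := by
        rw [mul_pow]; ring



/-- `I`-Bessel in terms of `Pfun`. -/
lemma Ibessel_eq (σ : ℂ) (m : ℕ) (x : ℝ) :
    Ibessel ((m : ℂ) + σ) x = Complex.exp (((m : ℂ) + σ) * (Real.log (x / 2) : ℂ)) *
      Pfun σ m (Complex.exp (2 * (Real.log (x / 2) : ℂ))) := by
  rw [Ibessel, Pfun, ← tsum_mul_left]
  apply tsum_congr
  intro n
  set L : ℂ := (Real.log (x / 2) : ℂ) with hL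
  have h1 : (n : ℂ) + ((m : ℂ) + σ) + 1 = σ + 1 + ((m + n : ℕ) : ℂ) := by push_cast; ring
  rw [h1]
  have h2 : Complex.exp (((m : ℂ) + σ + 2 * n) * L)
      = Complex.exp (((m : ℂ) + σ) * L) * Complex.exp (2 * L) ^ n := by
    rw [← Complex.exp_nat_mul, ← Complex.exp_add]
    congr 1
    ring
  rw [h2, mul_div_assoc]

/-- Mcirc in logarithmic coordinates. -/
lemma Mcirc_eq_Phi (l₁ l₂ l₃ : ℂ) (hsum : l₁ + l₂ + l₃ = 0) (y₁ y₂ : ℝ)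
    (hy₁ : 0 < y₁) (hy₂ : 0 < y₂) :
    Mcirc l₁ l₂ l₃ y₁ y₂ =
      Phi l₁ l₂ l₃ ((Real.log (π * y₁) : ℝ) : ℂ) ((Real.log (π * y₂) : ℝ) : ℂ) := by
  have hp₁ : (0:ℝ) < π * y₁ := mul_pos Real.pi_pos hy₁
  have hp₂ : (0:ℝ) < π * y₂ := mul_pos Real.pi_pos hy₂
  have hb₁ : ((π * y₁ : ℝ) : ℂ) ≠ 0 := by exact_mod_cast ne_of_gt hp₁
  have hb₂ : ((π * y₂ : ℝ) : ℂ) ≠ 0 := by exact_mod_cast ne_of_gt hp₂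
  have hx₁ : (2 * π * y₁) / 2 = π * y₁ := by ring
  have hx₂ : (2 * π * y₂) / 2 = π * y₂ := by ring
  rw [Mcirc, Phi]
  apply tsum_congr
  intro m
  rw [Ibessel_eq ((l₁ - l₂) / 2) m, Ibessel_eq ((l₂ - l₃) / 2) m, hx₁, hx₂,
    Complex.cpow_def_of_ne_zero hb₁, Complex.cpow_def_of_ne_zero hb₂,
    ← Complex.ofReal_log hp₁.le, ← Complex.ofReal_log hp₂.le]
  set u : ℂ := ((Real.log (π * y₁) : ℝ) : ℂ) with hu
  set v : ℂ := ((Real.log (π * y₂) : ℝ) : ℂ) with hv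
  have hΓ : (m : ℂ) + (l₁ - l₃) / 2 + 1 = (l₁ - l₃) / 2 + 1 + (m : ℂ) := by ring
  rw [hΓ]
  have key : ∀ (P₁ P₂ d : ℂ),
      Complex.exp (u * ((m : ℂ) - l₃ / 2)) * Complex.exp (v * ((m : ℂ) + l₁ / 2)) / d *
        (Complex.exp (((m : ℂ) + (l₁ - l₂) / 2) * u) * P₁) *
        (Complex.exp (((m : ℂ) + (l₂ - l₃) / 2) * v) * P₂)
      = Complex.exp ((2 * m + l₁) * u + (2 * m - l₃) * v) / d * P₁ * P₂ := by
    intro P₁ P₂ d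
    have hE : u * ((m : ℂ) - l₃ / 2) + v * ((m : ℂ) + l₁ / 2) +
        ((m : ℂ) + (l₁ - l₂) / 2) * u + ((m : ℂ) + (l₂ - l₃) / 2) * v
        = (2 * m + l₁) * u + (2 * m - l₃) * v := by
      linear_combination (v / 2 - u / 2) * hsum
    rw [← hE, Complex.exp_add, Complex.exp_add, Complex.exp_add]
    ring
  exact key _ _ _

/-- Shift of `Φ` in the first variable. -/
lemma Phi_shift_u (l₁ l₂ l₃ u v : ℂ) :
    Phi l₁ l₂ l₃ (u + ↑π * I) v = Complex.exp (↑π * I * l₁) * Phi l₁ l₂ l₃ u v := by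
  rw [Phi, Phi, ← tsum_mul_left]
  apply tsum_congr
  intro m
  have h2u : Complex.exp (2 * (u + ↑π * I)) = Complex.exp (2 * u) := by
    rw [Complex.exp_eq_exp_iff_exists_int]
    exact ⟨1, by push_cast; ring⟩
  have hexp : Complex.exp ((2 * m + l₁) * (u + ↑π * I) + (2 * m - l₃) * v)
      = Complex.exp (↑π * I * l₁) * Complex.exp ((2 * m + l₁) * u + (2 * m - l₃) * v) := by
    rw [← Complex.exp_add, Complex.exp_eq_exp_iff_exists_int]
    exact ⟨m, by push_cast; ring⟩
  rw [h2u, hexp]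
  ring

/-- Shift of `Φ` in the second variable. -/
lemma Phi_shift_v (l₁ l₂ l₃ u v : ℂ) :
    Phi l₁ l₂ l₃ u (v + ↑π * I) = Complex.exp (-(↑π * I * l₃)) * Phi l₁ l₂ l₃ u v := by
  rw [Phi, Phi, ← tsum_mul_left]
  apply tsum_congr
  intro m
  have h2v : Complex.exp (2 * (v + ↑π * I)) = Complex.exp (2 * v) := by
    rw [Complex.exp_eq_exp_iff_exists_int]
    exact ⟨1, by push_cast; ring⟩
  have hexp : Complex.exp ((2 * m + l₁) * u + (2 * m - l₃) * (v + ↑π * I))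
      = Complex.exp (-(↑π * I * l₃)) * Complex.exp ((2 * m + l₁) * u + (2 * m - l₃) * v) := by
    rw [← Complex.exp_add, Complex.exp_eq_exp_iff_exists_int]
    exact ⟨m, by push_cast; ring⟩
  rw [h2v, hexp]
  ring

lemma Phi_shift_u_iter (l₁ l₂ l₃ u v : ℂ) (k : ℕ) :
    Phi l₁ l₂ l₃ (u + k * (↑π * I)) v
      = Complex.exp (↑π * I * l₁) ^ k * Phi l₁ l₂ l₃ u v := by
  induction k with
  | zero => simp
  | succ k ih =>
    have : u + ((k + 1 : ℕ) : ℂ) * (↑π * I) = (u + k * (↑π * I)) + ↑π * I := by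
      push_cast; ring
    rw [this, Phi_shift_u, ih, pow_succ]
    ring

lemma Phi_shift_v_iter (l₁ l₂ l₃ u v : ℂ) (k : ℕ) :
    Phi l₁ l₂ l₃ u (v + k * (↑π * I))
      = Complex.exp (-(↑π * I * l₃)) ^ k * Phi l₁ l₂ l₃ u v := by
  induction k with
  | zero => simp
  | succ k ih =>
    have : v + ((k + 1 : ℕ) : ℂ) * (↑π * I) = (v + k * (↑π * I)) + ↑π * I := by
      push_cast; ring
    rw [this, Phi_shift_v, ih, pow_succ]
    ring



/-- Differentiability of `Φ` in the first variable. -/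
lemma Phi_diff_u
    (h₁ : ∀ k : ℕ, (l₁ - l₃) / 2 + 1 + (k : ℂ) ≠ 0)
    (h₂ : ∀ k : ℕ, (l₁ - l₂) / 2 + 1 + (k : ℂ) ≠ 0)
    (h₃ : ∀ k : ℕ, (l₂ - l₃) / 2 + 1 + (k : ℂ) ≠ 0) (v : ℂ) :
    Differentiable ℂ (fun u => Phi l₁ l₂ l₃ u v) := by
  obtain ⟨C₁, K₁, hC₁, hK₁, hG₁⟩ := gammaInv_bound _ h₁
  obtain ⟨C₂, K₂, hC₂, hK₂, hG₂⟩ := gammaInv_bound _ h₂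
  obtain ⟨C₃, K₃, hC₃, hK₃, hG₃⟩ := gammaInv_bound _ h₃
  obtain ⟨C, K, hC, hK, hbound⟩ := Phi_term_bound l₁ l₂ l₃ h₁ h₂ h₃
  intro u₀
  set R : ℝ := ‖u₀‖ + 1 with hR
  have hR0 : 0 ≤ R := by positivity
  have hS0 : 0 ≤ ‖v‖ := norm_nonneg v
  have hdiff : DifferentiableOn ℂ (fun u => Phi l₁ l₂ l₃ u v) (Metric.ball 0 R) := by
    rw [show (fun u => Phi l₁ l₂ l₃ u v) = fun u => ∑' m : ℕ,
      Complex.exp ((2 * m + l₁) * u + (2 * m - l₃) * v) /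
        ((m.factorial : ℂ) * Complex.Gamma ((l₁ - l₃) / 2 + 1 + (m : ℂ))) *
        Pfun ((l₁ - l₂) / 2) m (Complex.exp (2 * u)) *
        Pfun ((l₂ - l₃) / 2) m (Complex.exp (2 * v)) from rfl]
    apply differentiableOn_tsum_of_summable_norm
      (u := fun m : ℕ => (C * Real.exp (K * (R + ‖v‖)) * Real.exp (K * Real.exp (2 * R)) *
        Real.exp (K * Real.exp (2 * ‖v‖))) *
        ((K * Real.exp (2 * R + 2 * ‖v‖)) ^ m / m.factorial))
    · exact (Real.summable_pow_div_factorial (K * Real.exp (2 * R + 2 * ‖v‖))).mul_left _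
    · intro m
      apply DifferentiableOn.mul
      apply DifferentiableOn.mul
      · apply DifferentiableOn.div_const
        apply Differentiable.differentiableOn
        apply Complex.differentiable_exp.comp
        fun_prop
      · apply Differentiable.differentiableOn
        exact (Pfun_differentiable hC₂ hK₂ hG₂ m).comp
          (Complex.differentiable_exp.comp (differentiable_const 2 |>.mul differentiable_id))
      · exact differentiableOn_const _
    · exact Metric.isOpen_ball
    · intro m w hw
      exact hbound R ‖v‖ hR0 hS0 m w v (le_of_lt (mem_ball_zero_iff.1 hw)) le_rfl
  have hz₀ : u₀ ∈ Metric.ball (0:ℂ) R := by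
    rw [mem_ball_zero_iff, hR]; linarith
  exact (hdiff u₀ hz₀).differentiableAt (Metric.isOpen_ball.mem_nhds hz₀)

/-- Differentiability of `Φ` in the second variable. -/
lemma Phi_diff_v
    (h₁ : ∀ k : ℕ, (l₁ - l₃) / 2 + 1 + (k : ℂ) ≠ 0)
    (h₂ : ∀ k : ℕ, (l₁ - l₂) / 2 + 1 + (k : ℂ) ≠ 0)
    (h₃ : ∀ k : ℕ, (l₂ - l₃) / 2 + 1 + (k : ℂ) ≠ 0) (u : ℂ) :
    Differentiable ℂ (fun v => Phi l₁ l₂ l₃ u v) := by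
  obtain ⟨C₁, K₁, hC₁, hK₁, hG₁⟩ := gammaInv_bound _ h₁
  obtain ⟨C₂, K₂, hC₂, hK₂, hG₂⟩ := gammaInv_bound _ h₂
  obtain ⟨C₃, K₃, hC₃, hK₃, hG₃⟩ := gammaInv_bound _ h₃
  obtain ⟨C, K, hC, hK, hbound⟩ := Phi_term_bound l₁ l₂ l₃ h₁ h₂ h₃
  intro v₀
  set S : ℝ := ‖v₀‖ + 1 with hS
  have hS0 : 0 ≤ S := by positivity
  have hR0 : 0 ≤ ‖u‖ := norm_nonneg u
  have hdiff : DifferentiableOn ℂ (fun v => Phi l₁ l₂ l₃ u v) (Metric.ball 0 S) := by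
    rw [show (fun v => Phi l₁ l₂ l₃ u v) = fun v => ∑' m : ℕ,
      Complex.exp ((2 * m + l₁) * u + (2 * m - l₃) * v) /
        ((m.factorial : ℂ) * Complex.Gamma ((l₁ - l₃) / 2 + 1 + (m : ℂ))) *
        Pfun ((l₁ - l₂) / 2) m (Complex.exp (2 * u)) *
        Pfun ((l₂ - l₃) / 2) m (Complex.exp (2 * v)) from rfl]
    apply differentiableOn_tsum_of_summable_norm
      (u := fun m : ℕ => (C * Real.exp (K * (‖u‖ + S)) * Real.exp (K * Real.exp (2 * ‖u‖)) *
        Real.exp (K * Real.exp (2 * S))) *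
        ((K * Real.exp (2 * ‖u‖ + 2 * S)) ^ m / m.factorial))
    · exact (Real.summable_pow_div_factorial (K * Real.exp (2 * ‖u‖ + 2 * S))).mul_left _
    · intro m
      apply DifferentiableOn.mul
      apply DifferentiableOn.mul
      · apply DifferentiableOn.div_const
        apply Differentiable.differentiableOn
        apply Complex.differentiable_exp.comp
        fun_prop
      · exact differentiableOn_const _
      · apply Differentiable.differentiableOn
        exact (Pfun_differentiable hC₃ hK₃ hG₃ m).comp
          (Complex.differentiable_exp.comp (differentiable_const 2 |>.mul differentiable_id))
    · exact Metric.isOpen_ball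
    · intro m w hw
      exact hbound ‖u‖ S hR0 hS0 m u w le_rfl (le_of_lt (mem_ball_zero_iff.1 hw))
  have hz₀ : v₀ ∈ Metric.ball (0:ℂ) S := by
    rw [mem_ball_zero_iff, hS]; linarith
  exact (hdiff v₀ hz₀).differentiableAt (Metric.isOpen_ball.mem_nhds hz₀)



/-- Diagonal restriction of `Φ`, as a power series in `x`. -/
lemma Phi_diag (l₁ l₂ l₃ u : ℂ) :
    Phi l₁ l₂ l₃ u u = Complex.exp ((l₁ - l₃) * u) * gfun l₁ l₂ l₃ (Complex.exp (2 * u)) := by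
  rw [Phi, gfun, ← tsum_mul_left]
  apply tsum_congr
  intro m
  have h : Complex.exp ((2 * m + l₁) * u + (2 * m - l₃) * u)
      = Complex.exp ((l₁ - l₃) * u) * Complex.exp (2 * u) ^ (2 * m) := by
    rw [← Complex.exp_nat_mul, ← Complex.exp_add]
    congr 1
    push_cast
    ring
  rw [h]
  ring

variable {l₁ l₂ l₃ : ℂ}

lemma gfun_term_bound
    (h₁ : ∀ k : ℕ, (l₁ - l₃) / 2 + 1 + (k : ℂ) ≠ 0)
    (h₂ : ∀ k : ℕ, (l₁ - l₂) / 2 + 1 + (k : ℂ) ≠ 0)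
    (h₃ : ∀ k : ℕ, (l₂ - l₃) / 2 + 1 + (k : ℂ) ≠ 0) :
    ∃ D Q : ℝ, 0 < D ∧ 0 < Q ∧ ∀ (m : ℕ) (x : ℂ), ‖x‖ ≤ 1 →
      ‖x ^ (2 * m) / ((m.factorial : ℂ) * Complex.Gamma ((l₁ - l₃) / 2 + 1 + (m : ℂ))) *
        Pfun ((l₁ - l₂) / 2) m x * Pfun ((l₂ - l₃) / 2) m x‖ ≤ D * (Q ^ m / m.factorial) := by
  obtain ⟨C₁, K₁, hC₁, hK₁, hG₁⟩ := gammaInv_bound _ h₁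
  obtain ⟨C₂, K₂, hC₂, hK₂, hG₂⟩ := gammaInv_bound _ h₂
  obtain ⟨C₃, K₃, hC₃, hK₃, hG₃⟩ := gammaInv_bound _ h₃
  have hC₁0 : (0:ℝ) < C₁ := lt_of_lt_of_le one_pos hC₁
  have hC₂0 : (0:ℝ) < C₂ := lt_of_lt_of_le one_pos hC₂
  have hC₃0 : (0:ℝ) < C₃ := lt_of_lt_of_le one_pos hC₃
  have hK₁0 : (0:ℝ) < K₁ := lt_of_lt_of_le one_pos hK₁
  have hK₂0 : (0:ℝ) < K₂ := lt_of_lt_of_le one_pos hK₂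
  have hK₃0 : (0:ℝ) < K₃ := lt_of_lt_of_le one_pos hK₃
  refine ⟨C₁ * C₂ * C₃ * Real.exp K₂ * Real.exp K₃, K₁ * K₂ * K₃, ?_, ?_, ?_⟩
  · have := Real.exp_pos K₂
    have := Real.exp_pos K₃
    positivity
  · positivity
  intro m x hx
  have hfac₁ : (1:ℝ) ≤ (m.factorial : ℝ) := by
    exact_mod_cast Nat.one_le_iff_ne_zero.2 (Nat.factorial_ne_zero m)
  have hfacpos : (0:ℝ) < (m.factorial : ℝ) := by positivity
  have e1 : ‖x ^ (2 * m)‖ ≤ 1 := by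
    rw [norm_pow]
    exact pow_le_one₀ (norm_nonneg x) hx
  have e2 : ‖((m.factorial : ℂ) * Complex.Gamma ((l₁ - l₃) / 2 + 1 + (m : ℂ)))⁻¹‖ ≤
      C₁ * K₁ ^ m / m.factorial := by
    rw [mul_inv, norm_mul, norm_inv, Complex.norm_natCast]
    have hle : ((m.factorial : ℝ))⁻¹ ≤ 1 := by
      rw [inv_le_one_iff₀]; right; exact hfac₁
    calc ((m.factorial : ℝ))⁻¹ * ‖(Complex.Gamma ((l₁ - l₃) / 2 + 1 + (m : ℂ)))⁻¹‖
        ≤ 1 * ‖(Complex.Gamma ((l₁ - l₃) / 2 + 1 + (m : ℂ)))⁻¹‖ :=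
          mul_le_mul_of_nonneg_right hle (norm_nonneg _)
      _ = ‖(Complex.Gamma ((l₁ - l₃) / 2 + 1 + (m : ℂ)))⁻¹‖ := one_mul _
      _ ≤ C₁ * K₁ ^ m / m.factorial := hG₁ m
  have e3 : ‖Pfun ((l₁ - l₂) / 2) m x‖ ≤ C₂ * K₂ ^ m * Real.exp K₂ := by
    have h := Pfun_norm_le hC₂ hK₂ hG₂ m x
    have hmono : Real.exp (K₂ * ‖x‖) ≤ Real.exp K₂ :=
      Real.exp_le_exp.2 (by nlinarith [norm_nonneg x])
    have hfacle : C₂ * K₂ ^ m / m.factorial ≤ C₂ * K₂ ^ m :=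
      div_le_self (mul_pos hC₂0 (pow_pos hK₂0 m)).le hfac₁
    exact h.trans (mul_le_mul hfacle hmono (Real.exp_pos _).le
      (mul_pos hC₂0 (pow_pos hK₂0 m)).le)
  have e4 : ‖Pfun ((l₂ - l₃) / 2) m x‖ ≤ C₃ * K₃ ^ m * Real.exp K₃ := by
    have h := Pfun_norm_le hC₃ hK₃ hG₃ m x
    have hmono : Real.exp (K₃ * ‖x‖) ≤ Real.exp K₃ :=
      Real.exp_le_exp.2 (by nlinarith [norm_nonneg x])
    have hfacle : C₃ * K₃ ^ m / m.factorial ≤ C₃ * K₃ ^ m :=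
      div_le_self (mul_pos hC₃0 (pow_pos hK₃0 m)).le hfac₁
    exact h.trans (mul_le_mul hfacle hmono (Real.exp_pos _).le
      (mul_pos hC₃0 (pow_pos hK₃0 m)).le)
  have hsplit : ‖x ^ (2 * m) / ((m.factorial : ℂ) * Complex.Gamma ((l₁ - l₃) / 2 + 1 + (m : ℂ))) *
        Pfun ((l₁ - l₂) / 2) m x * Pfun ((l₂ - l₃) / 2) m x‖
      = ‖x ^ (2 * m)‖ * ‖((m.factorial : ℂ) * Complex.Gamma ((l₁ - l₃) / 2 + 1 + (m : ℂ)))⁻¹‖ *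
        ‖Pfun ((l₁ - l₂) / 2) m x‖ * ‖Pfun ((l₂ - l₃) / 2) m x‖ := by
    rw [div_eq_mul_inv, norm_mul, norm_mul, norm_mul]
  rw [hsplit]
  have n1 : (0:ℝ) ≤ C₁ * K₁ ^ m / m.factorial :=
    div_nonneg (mul_nonneg hC₁0.le (pow_pos hK₁0 m).le) hfacpos.le
  have n3 : (0:ℝ) ≤ C₂ * K₂ ^ m * Real.exp K₂ :=
    (mul_pos (mul_pos hC₂0 (pow_pos hK₂0 m)) (Real.exp_pos _)).le
  calc ‖x ^ (2 * m)‖ * ‖((m.factorial : ℂ) * Complex.Gamma ((l₁ - l₃) / 2 + 1 + (m : ℂ)))⁻¹‖ *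
        ‖Pfun ((l₁ - l₂) / 2) m x‖ * ‖Pfun ((l₂ - l₃) / 2) m x‖
      ≤ (1 * (C₁ * K₁ ^ m / m.factorial)) * (C₂ * K₂ ^ m * Real.exp K₂) *
        (C₃ * K₃ ^ m * Real.exp K₃) := by
        apply mul_le_mul ?_ e4 (norm_nonneg _) ?_
        · apply mul_le_mul ?_ e3 (norm_nonneg _) ?_
          · exact mul_le_mul e1 e2 (norm_nonneg _) zero_le_one
          · exact mul_nonneg zero_le_one n1
        · exact mul_nonneg (mul_nonneg zero_le_one n1) n3
    _ = (C₁ * C₂ * C₃ * Real.exp K₂ * Real.exp K₃) * ((K₁ * K₂ * K₃) ^ m / m.factorial) := by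
        rw [mul_pow, mul_pow]
        ring

lemma gfun_continuousOn
    (h₁ : ∀ k : ℕ, (l₁ - l₃) / 2 + 1 + (k : ℂ) ≠ 0)
    (h₂ : ∀ k : ℕ, (l₁ - l₂) / 2 + 1 + (k : ℂ) ≠ 0)
    (h₃ : ∀ k : ℕ, (l₂ - l₃) / 2 + 1 + (k : ℂ) ≠ 0) :
    ContinuousOn (gfun l₁ l₂ l₃) (Metric.ball (0:ℂ) 1) := by
  obtain ⟨C₂, K₂, hC₂, hK₂, hG₂⟩ := gammaInv_bound _ h₂
  obtain ⟨C₃, K₃, hC₃, hK₃, hG₃⟩ := gammaInv_bound _ h₃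
  obtain ⟨D, Q, hD, hQ, hb⟩ := gfun_term_bound h₁ h₂ h₃
  rw [show gfun l₁ l₂ l₃ = fun x => ∑' m : ℕ,
    x ^ (2 * m) / ((m.factorial : ℂ) * Complex.Gamma ((l₁ - l₃) / 2 + 1 + (m : ℂ))) *
      Pfun ((l₁ - l₂) / 2) m x * Pfun ((l₂ - l₃) / 2) m x from rfl]
  apply continuousOn_tsum (u := fun m : ℕ => D * (Q ^ m / m.factorial))
  · intro m
    apply ContinuousOn.mul
    apply ContinuousOn.mul
    · apply ContinuousOn.div_const
      exact (continuous_pow (2 * m)).continuousOn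
    · exact (Pfun_differentiable hC₂ hK₂ hG₂ m).continuous.continuousOn
    · exact (Pfun_differentiable hC₃ hK₃ hG₃ m).continuous.continuousOn
  · exact ((Real.summable_pow_div_factorial Q).mul_left D)
  · intro m x hx
    exact hb m x (le_of_lt (mem_ball_zero_iff.1 hx))

lemma gfun_zero_val :
    gfun l₁ l₂ l₃ 0 = (Complex.Gamma ((l₁ - l₃) / 2 + 1))⁻¹ *
      (Complex.Gamma ((l₁ - l₂) / 2 + 1))⁻¹ * (Complex.Gamma ((l₂ - l₃) / 2 + 1))⁻¹ := by
  rw [gfun, tsum_eq_single 0]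
  · simp [Pfun_zero]
  · intro m hm
    have h2m : 2 * m ≠ 0 := by omega
    rw [zero_pow h2m, zero_div, zero_mul, zero_mul]

/-- If `c * gfun x = 0` for all small positive real `x`, then `c = 0`. -/
lemma c_eq_zero_of_gfun
    (h₁ : ∀ k : ℕ, (l₁ - l₃) / 2 + 1 + (k : ℂ) ≠ 0)
    (h₂ : ∀ k : ℕ, (l₁ - l₂) / 2 + 1 + (k : ℂ) ≠ 0)
    (h₃ : ∀ k : ℕ, (l₂ - l₃) / 2 + 1 + (k : ℂ) ≠ 0)
    (c : ℂ) (h : ∀ x : ℝ, 0 < x → x < 1 → c * gfun l₁ l₂ l₃ ((x : ℝ) : ℂ) = 0) :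
    c = 0 := by
  -- gfun 0 ≠ 0
  have hne : gfun l₁ l₂ l₃ 0 ≠ 0 := by
    rw [gfun_zero_val]
    have g1 : Complex.Gamma ((l₁ - l₃) / 2 + 1) ≠ 0 := by
      apply Complex.Gamma_ne_zero
      intro m hm
      exact h₁ m (by rw [hm]; push_cast; ring)
    have g2 : Complex.Gamma ((l₁ - l₂) / 2 + 1) ≠ 0 := by
      apply Complex.Gamma_ne_zero
      intro m hm
      exact h₂ m (by rw [hm]; push_cast; ring)
    have g3 : Complex.Gamma ((l₂ - l₃) / 2 + 1) ≠ 0 := by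
      apply Complex.Gamma_ne_zero
      intro m hm
      exact h₃ m (by rw [hm]; push_cast; ring)
    exact mul_ne_zero (mul_ne_zero (inv_ne_zero g1) (inv_ne_zero g2)) (inv_ne_zero g3)
  -- sequence
  set xseq : ℕ → ℂ := fun n => (((1:ℝ) / (n + 2) : ℝ) : ℂ) with hxseq
  have hx01 : ∀ n : ℕ, 0 < (1:ℝ) / (n + 2) ∧ (1:ℝ) / (n + 2) < 1 := by
    intro n
    constructor
    · positivity
    · rw [div_lt_one (by positivity)]
      have : (0:ℝ) ≤ (n:ℝ) := Nat.cast_nonneg n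
      linarith
  have htend : Filter.Tendsto xseq Filter.atTop (nhds (0:ℂ)) := by
    rw [hxseq]
    have : Filter.Tendsto (fun n : ℕ => (1:ℝ) / (n + 2)) Filter.atTop (nhds 0) := by
      have h2 : Filter.Tendsto (fun n : ℕ => ((n:ℝ) + 2)) Filter.atTop Filter.atTop :=
        Filter.tendsto_atTop_add_const_right _ 2 tendsto_natCast_atTop_atTop
      simpa [Pi.inv_def] using h2.inv_tendsto_atTop
    exact (Complex.continuous_ofReal.tendsto 0).comp this
  have hcont : ContinuousAt (gfun l₁ l₂ l₃) 0 := by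
    have hball : Metric.ball (0:ℂ) 1 ∈ nhds (0:ℂ) :=
      Metric.isOpen_ball.mem_nhds (by simp)
    exact (gfun_continuousOn h₁ h₂ h₃).continuousAt hball
  have htend2 : Filter.Tendsto (fun n => c * gfun l₁ l₂ l₃ (xseq n)) Filter.atTop
      (nhds (c * gfun l₁ l₂ l₃ 0)) :=
    Filter.Tendsto.const_mul c ((hcont.tendsto).comp htend)
  have heq : (fun n => c * gfun l₁ l₂ l₃ (xseq n)) = fun _ => (0:ℂ) := by
    funext n
    exact h _ (hx01 n).1 (hx01 n).2
  rw [heq] at htend2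
  have : c * gfun l₁ l₂ l₃ 0 = 0 := by
    exact (tendsto_nhds_unique htend2 tendsto_const_nhds).symm ▸ rfl
  rcases mul_eq_zero.1 this with h0 | h0
  · exact h0
  · exact absurd h0 hne



/-- An entire function vanishing on the reals vanishes identically. -/
lemma entire_zero_of_real_zero {f : ℂ → ℂ} (hf : Differentiable ℂ f)
    (h0 : ∀ x : ℝ, f ((x : ℝ) : ℂ) = 0) : ∀ z : ℂ, f z = 0 := by
  have hA : AnalyticOnNhd ℂ f Set.univ :=
    (hf.differentiableOn).analyticOnNhd isOpen_univ
  have hseq : Filter.Tendsto (fun n : ℕ => (((1:ℝ) / (n + 2) : ℝ) : ℂ)) Filter.atTop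
      (nhdsWithin (0:ℂ) {(0:ℂ)}ᶜ) := by
    rw [tendsto_nhdsWithin_iff]
    constructor
    · have h2 : Filter.Tendsto (fun n : ℕ => ((n:ℝ) + 2)) Filter.atTop Filter.atTop :=
        Filter.tendsto_atTop_add_const_right _ 2 tendsto_natCast_atTop_atTop
      have : Filter.Tendsto (fun n : ℕ => (1:ℝ) / (n + 2)) Filter.atTop (nhds 0) := by
        simpa [Pi.inv_def] using h2.inv_tendsto_atTop
      exact (Complex.continuous_ofReal.tendsto 0).comp this
    · apply Filter.Eventually.of_forall
      intro n
      simp only [Set.mem_compl_iff, Set.mem_singleton_iff]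
      intro hcon
      rw [Complex.ofReal_eq_zero] at hcon
      have : (0:ℝ) < 1 / (n + 2) := by positivity
      linarith [this, le_of_eq hcon.symm]
  have hfreq : ∃ᶠ z in nhdsWithin (0:ℂ) {(0:ℂ)}ᶜ, f z = 0 :=
    hseq.frequently (Filter.Frequently.of_forall fun n => h0 _)
  have := hA.eqOn_zero_of_preconnected_of_frequently_eq_zero isPreconnected_univ
    (Set.mem_univ (0:ℂ)) hfreq
  intro z
  exact this (Set.mem_univ z)

/-- 3×3 Vandermonde-type extraction. -/
lemma vand1 {a : Fin 3 → ℂ} (ha : Function.Injective a) (x : Fin 3 → ℂ)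
    (h : ∀ k : ℕ, k ≤ 2 → (∑ i, x i * a i ^ k) = 0) : ∀ i, x i = 0 := by
  have h0 := h 0 (by norm_num)
  have h1 := h 1 (by norm_num)
  have h2 := h 2 (by norm_num)
  rw [Fin.sum_univ_three] at h0 h1 h2
  have d01 : a 0 - a 1 ≠ 0 := sub_ne_zero.2 fun e => absurd (ha e) (by decide)
  have d02 : a 0 - a 2 ≠ 0 := sub_ne_zero.2 fun e => absurd (ha e) (by decide)
  have d10 : a 1 - a 0 ≠ 0 := sub_ne_zero.2 fun e => absurd (ha e) (by decide)
  have d12 : a 1 - a 2 ≠ 0 := sub_ne_zero.2 fun e => absurd (ha e) (by decide)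
  have d20 : a 2 - a 0 ≠ 0 := sub_ne_zero.2 fun e => absurd (ha e) (by decide)
  have d21 : a 2 - a 1 ≠ 0 := sub_ne_zero.2 fun e => absurd (ha e) (by decide)
  intro i
  fin_cases i
  · have key : x 0 * ((a 0 - a 1) * (a 0 - a 2)) = 0 := by
      linear_combination h2 - (a 1 + a 2) * h1 + (a 1 * a 2) * h0
    exact (mul_eq_zero.1 key).resolve_right (mul_ne_zero d01 d02)
  · have key : x 1 * ((a 1 - a 0) * (a 1 - a 2)) = 0 := by
      linear_combination h2 - (a 0 + a 2) * h1 + (a 0 * a 2) * h0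
    exact (mul_eq_zero.1 key).resolve_right (mul_ne_zero d10 d12)
  · have key : x 2 * ((a 2 - a 0) * (a 2 - a 1)) = 0 := by
      linear_combination h2 - (a 0 + a 1) * h1 + (a 0 * a 1) * h0
    exact (mul_eq_zero.1 key).resolve_right (mul_ne_zero d20 d21)

lemma perm_vand {A B : Fin 3 → ℂ} (hA : Function.Injective A) (hB : Function.Injective B)
    (d : Equiv.Perm (Fin 3) → ℂ)
    (H : ∀ k j : ℕ, k ≤ 2 → j ≤ 2 →
      ∑ w : Equiv.Perm (Fin 3), d w * A (w 0) ^ k * B (w 2) ^ j = 0) :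
    ∀ w, d w = 0 := by
  classical
  -- first kill the B-powers
  have hBstage : ∀ k : ℕ, k ≤ 2 → ∀ i' : Fin 3,
      (∑ w : Equiv.Perm (Fin 3), if w 2 = i' then d w * A (w 0) ^ k else 0) = 0 := by
    intro k hk
    apply vand1 hB
    intro j hj
    have e1 : ∑ i' : Fin 3,
        (∑ w : Equiv.Perm (Fin 3), if w 2 = i' then d w * A (w 0) ^ k else 0) * B i' ^ j
        = ∑ w : Equiv.Perm (Fin 3), d w * A (w 0) ^ k * B (w 2) ^ j := by
      simp_rw [Finset.sum_mul, ite_mul, zero_mul]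
      rw [Finset.sum_comm]
      apply Finset.sum_congr rfl
      intro w _
      rw [Finset.sum_ite_eq]
      simp
    rw [e1]
    exact H k j hk hj
  -- then kill the A-powers
  have hAstage : ∀ i' i : Fin 3,
      (∑ w : Equiv.Perm (Fin 3), if w 0 = i ∧ w 2 = i' then d w else 0) = 0 := by
    intro i'
    apply vand1 hA
    intro k hk
    have e2 : ∑ i : Fin 3,
        (∑ w : Equiv.Perm (Fin 3), if w 0 = i ∧ w 2 = i' then d w else 0) * A i ^ k
        = ∑ w : Equiv.Perm (Fin 3), if w 2 = i' then d w * A (w 0) ^ k else 0 := by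
      simp_rw [Finset.sum_mul, ite_mul, zero_mul]
      rw [Finset.sum_comm]
      apply Finset.sum_congr rfl
      intro w _
      by_cases hw : w 2 = i'
      · simp [hw, Finset.sum_ite_eq]
      · simp [hw]
    rw [e2]
    exact hBstage k hk i'
  intro w
  have huniq : ∀ w w' : Equiv.Perm (Fin 3), w 0 = w' 0 → w 2 = w' 2 → w = w' := by decide
  have h := hAstage (w 2) (w 0)
  rw [Finset.sum_eq_single w] at h
  · simpa using h
  · intro b _ hb
    rw [if_neg]
    rintro ⟨e1, e2⟩
    exact hb (huniq b w e1 e2)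
  · intro hw
    exact absurd (Finset.mem_univ w) hw



theorem statement18 (l : Fin 3 → ℂ) (hsum : l 0 + l 1 + l 2 = 0)
    (hgen : ∀ i j : Fin 3, i ≠ j → ∀ n : ℤ, l i - l j ≠ 2 * n) :
    ∀ c : Equiv.Perm (Fin 3) → ℂ,
      (∀ y₁ y₂ : ℝ, 0 < y₁ → 0 < y₂ →
        ∑ w : Equiv.Perm (Fin 3), c w * Mcirc (l (w 0)) (l (w 1)) (l (w 2)) y₁ y₂ = 0) →
      ∀ w : Equiv.Perm (Fin 3), c w = 0 := by
  intro c hc w₀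
  have hσgen : ∀ i j : Fin 3, i ≠ j → ∀ k : ℕ, (l i - l j) / 2 + 1 + (k : ℂ) ≠ 0 := by
    intro i j hij k h
    apply hgen i j hij (-(1 + k))
    push_cast
    linear_combination 2 * h
  have hne01 : ∀ w : Equiv.Perm (Fin 3), w 0 ≠ w 1 :=
    fun w e => absurd (w.injective e) (by decide)
  have hne02 : ∀ w : Equiv.Perm (Fin 3), w 0 ≠ w 2 :=
    fun w e => absurd (w.injective e) (by decide)
  have hne12 : ∀ w : Equiv.Perm (Fin 3), w 1 ≠ w 2 :=
    fun w e => absurd (w.injective e) (by decide)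
  have H1 : ∀ w : Equiv.Perm (Fin 3), ∀ k : ℕ,
      (l (w 0) - l (w 2)) / 2 + 1 + (k : ℂ) ≠ 0 := fun w => hσgen _ _ (hne02 w)
  have H2 : ∀ w : Equiv.Perm (Fin 3), ∀ k : ℕ,
      (l (w 0) - l (w 1)) / 2 + 1 + (k : ℂ) ≠ 0 := fun w => hσgen _ _ (hne01 w)
  have H3 : ∀ w : Equiv.Perm (Fin 3), ∀ k : ℕ,
      (l (w 1) - l (w 2)) / 2 + 1 + (k : ℂ) ≠ 0 := fun w => hσgen _ _ (hne12 w)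
  have hsum_w : ∀ w : Equiv.Perm (Fin 3), l (w 0) + l (w 1) + l (w 2) = 0 := by
    intro w
    have h := Equiv.sum_comp w l
    rw [Fin.sum_univ_three, Fin.sum_univ_three] at h
    exact h.trans hsum
  -- step 0: vanishing on the reals
  have hreal : ∀ x y : ℝ,
      ∑ w : Equiv.Perm (Fin 3), c w * Phi (l (w 0)) (l (w 1)) (l (w 2))
        ((x : ℝ) : ℂ) ((y : ℝ) : ℂ) = 0 := by
    intro x y
    have hy₁ : 0 < Real.exp x / π := div_pos (Real.exp_pos x) Real.pi_pos
    have hy₂ : 0 < Real.exp y / π := div_pos (Real.exp_pos y) Real.pi_pos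
    have hmc := hc _ _ hy₁ hy₂
    have harg₁ : π * (Real.exp x / π) = Real.exp x := by
      field_simp
    have harg₂ : π * (Real.exp y / π) = Real.exp y := by
      field_simp
    rw [← hmc]
    apply Finset.sum_congr rfl
    intro w _
    congr 1
    rw [Mcirc_eq_Phi _ _ _ (hsum_w w) _ _ hy₁ hy₂, harg₁, harg₂, Real.log_exp, Real.log_exp]
  -- step 1: vanishing for complex u, real v
  have hstep1 : ∀ (u : ℂ) (y : ℝ),
      ∑ w : Equiv.Perm (Fin 3), c w * Phi (l (w 0)) (l (w 1)) (l (w 2)) u ((y : ℝ) : ℂ) = 0 := by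
    intro u y
    apply entire_zero_of_real_zero
      (f := fun u => ∑ w : Equiv.Perm (Fin 3),
        c w * Phi (l (w 0)) (l (w 1)) (l (w 2)) u ((y : ℝ) : ℂ)) ?_ (fun x => hreal x y) u
    apply Differentiable.fun_sum
    intro w _
    exact (Phi_diff_u (H1 w) (H2 w) (H3 w) ((y : ℝ) : ℂ)).const_mul (c w)
  -- step 2: vanishing for complex u, v
  have hstep2 : ∀ u v : ℂ,
      ∑ w : Equiv.Perm (Fin 3), c w * Phi (l (w 0)) (l (w 1)) (l (w 2)) u v = 0 := by
    intro u v
    apply entire_zero_of_real_zero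
      (f := fun v => ∑ w : Equiv.Perm (Fin 3),
        c w * Phi (l (w 0)) (l (w 1)) (l (w 2)) u v) ?_ (fun y => hstep1 u y) v
    apply Differentiable.fun_sum
    intro w _
    exact (Phi_diff_v (H1 w) (H2 w) (H3 w) u).const_mul (c w)
  -- step 3: Vandermonde elimination
  have hzero : ∀ (w : Equiv.Perm (Fin 3)) (u v : ℂ),
      c w * Phi (l (w 0)) (l (w 1)) (l (w 2)) u v = 0 := by
    intro w u v
    have hπI : (↑π : ℂ) * I ≠ 0 :=
      mul_ne_zero (by exact_mod_cast Real.pi_ne_zero) Complex.I_ne_zero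
    have hAinj : Function.Injective (fun i : Fin 3 => Complex.exp (↑π * I * l i)) := by
      intro i j e
      by_contra hij
      simp only at e
      rw [Complex.exp_eq_exp_iff_exists_int] at e
      obtain ⟨n, hn⟩ := e
      apply hgen i j hij n
      have hmul : (↑π * I) * (l i - l j - 2 * n) = 0 := by linear_combination hn
      have h2 : l i - l j - 2 * n = 0 := (mul_eq_zero.1 hmul).resolve_left hπI
      linear_combination h2
    have hBinj : Function.Injective (fun i : Fin 3 => Complex.exp (-(↑π * I * l i))) := by
      intro i j e
      by_contra hij
      simp only at e
      rw [Complex.exp_eq_exp_iff_exists_int] at e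
      obtain ⟨n, hn⟩ := e
      apply hgen i j hij (-n)
      have hmul : (↑π * I) * (l i - l j + 2 * n) = 0 := by linear_combination -hn
      have h2 : l i - l j + 2 * n = 0 := (mul_eq_zero.1 hmul).resolve_left hπI
      push_cast
      linear_combination h2
    apply perm_vand hAinj hBinj
      (fun w => c w * Phi (l (w 0)) (l (w 1)) (l (w 2)) u v) ?_ w
    intro k j hk hj
    have h := hstep2 (u + k * (↑π * I)) (v + j * (↑π * I))
    rw [← h]
    apply Finset.sum_congr rfl
    intro w' _
    rw [Phi_shift_u_iter, Phi_shift_v_iter]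
    ring
  -- step 4: conclude via the diagonal limit
  apply c_eq_zero_of_gfun (H1 w₀) (H2 w₀) (H3 w₀)
  intro x hx0 hx1
  have hu := hzero w₀ ((Real.log x / 2 : ℝ) : ℂ) ((Real.log x / 2 : ℝ) : ℂ)
  rw [Phi_diag] at hu
  have hex : Complex.exp (2 * ((Real.log x / 2 : ℝ) : ℂ)) = ((x : ℝ) : ℂ) := by
    rw [show (2 : ℂ) * ((Real.log x / 2 : ℝ) : ℂ) = ((Real.log x : ℝ) : ℂ) by push_cast; ring,
      ← Complex.ofReal_exp, Real.exp_log hx0]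
  rw [hex] at hu
  have hexp_ne := Complex.exp_ne_zero
    ((l (w₀ 0) - l (w₀ 2)) * ((Real.log x / 2 : ℝ) : ℂ))
  rw [show c w₀ * (Complex.exp ((l (w₀ 0) - l (w₀ 2)) * ((Real.log x / 2 : ℝ) : ℂ)) *
      gfun (l (w₀ 0)) (l (w₀ 1)) (l (w₀ 2)) ((x : ℝ) : ℂ))
    = (c w₀ * gfun (l (w₀ 0)) (l (w₀ 1)) (l (w₀ 2)) ((x : ℝ) : ℂ)) *
      Complex.exp ((l (w₀ 0) - l (w₀ 2)) * ((Real.log x / 2 : ℝ) : ℂ)) from by ring] at hu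
  exact (mul_eq_zero.1 hu).resolve_right hexp_ne
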